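/- arXiv:1410.2789 — 4 statements merged into one kernel-verified Lean document; each statement's English description precedes it below -/
import Mathlib

section
/- Let M be a smooth manifold, let α be a smooth complex-valued 1-form, Θ a smooth complex 2-form, and η a smooth real 1-form on M satisfying dα ∧ η = Θ ∧ η and dη = (α + ᾱ) ∧ η. Then for n ≥ 2, d((iΘ − (1/n) iα ∧ ᾱ)^{n−1} ∧ iα ∧ η) = (iΘ − (1/n) iα ∧ ᾱ)^n ∧ η. -/
/-- An abstract calculus of smooth complex-valued differential forms on a compact
oriented smooth manifold (all degrees collected in one algebra `A`, with the
grading recorded by the predicate `deg`): wedge product is `*`, `d` is the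
exterior derivative, `conj` is complex conjugation of forms, `integral` is
integration of top-degree forms over the compact oriented manifold (so that
Stokes' theorem holds), `pos` singles out the positive volume forms, and
`nonvanishing` the nowhere-vanishing forms. -/
structure FormCalculus where
  A : Type
  [ring : Ring A]
  [alg : Algebra ℂ A]
  deg : ℕ → A → Prop
  d : A → A
  conj : A → A
  integral : A → ℂ
  pos : A → Prop
  nonvanishing : A → Prop
  deg_add : ∀ (k : ℕ) (a b : A), deg k a → deg k b → deg k (a + b)
  deg_smul : ∀ (k : ℕ) (c : ℂ) (a : A), deg k a → deg k (c • a)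
  deg_mul : ∀ (j k : ℕ) (a b : A), deg j a → deg k b → deg (j + k) (a * b)
  deg_d : ∀ (k : ℕ) (a : A), deg k a → deg (k + 1) (d a)
  d_add : ∀ a b : A, d (a + b) = d a + d b
  d_smul : ∀ (c : ℂ) (a : A), d (c • a) = c • d a
  d_d : ∀ a : A, d (d a) = 0
  leibniz : ∀ (j : ℕ) (a b : A), deg j a →
    d (a * b) = d a * b + ((-1 : ℂ) ^ j) • (a * d b)
  comm : ∀ (j k : ℕ) (a b : A), deg j a → deg k b →
    a * b = ((-1 : ℂ) ^ (j * k)) • (b * a)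
  conj_add : ∀ a b : A, conj (a + b) = conj a + conj b
  conj_smul : ∀ (c : ℂ) (a : A), conj (c • a) = (starRingEnd ℂ c) • conj a
  conj_mul : ∀ a b : A, conj (a * b) = conj a * conj b
  conj_conj : ∀ a : A, conj (conj a) = a
  conj_d : ∀ a : A, conj (d a) = d (conj a)
  integral_add : ∀ a b : A, integral (a + b) = integral a + integral b
  integral_smul : ∀ (c : ℂ) (a : A), integral (c • a) = c * integral a
  /-- Stokes' theorem on the compact manifold without boundary. -/
  stokes : ∀ a : A, integral (d a) = 0
  /-- A positive volume form has positive total integral. -/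
  pos_integral : ∀ a : A, pos a → 0 < (integral a).re

attribute [instance] FormCalculus.ring FormCalculus.alg

/-- On a smooth manifold, if `α` is a smooth complex 1-form,
`Θ` a smooth complex 2-form and `η` a smooth real 1-form with
`dα ∧ η = Θ ∧ η` and `dη = (α + ᾱ) ∧ η`, then for `n ≥ 2`, with
`Ω = iΘ − (1/n) iα ∧ ᾱ`, one has
`d(Ω^{n−1} ∧ iα ∧ η) = Ω^n ∧ η`. -/
theorem stmt_1 (S : FormCalculus) (n : ℕ) (hn : 2 ≤ n)
    (α Θ η : S.A) (hα : S.deg 1 α) (hΘ : S.deg 2 Θ)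
    (hη : S.deg 1 η) (hηreal : S.conj η = η)
    (e1 : S.d α * η = Θ * η)
    (e2 : S.d η = (α + S.conj α) * η)
    (Ω : S.A)
    (hΩ : Ω = Complex.I • Θ - (1 / (n : ℂ)) • (Complex.I • (α * S.conj α))) :
    S.d (Ω ^ (n - 1) * ((Complex.I • α) * η)) = Ω ^ n * η := by
  obtain ⟨l, rfl⟩ : ∃ l, n = l + 2 := ⟨n - 2, by omega⟩
  obtain ⟨β, hβ⟩ : ∃ x, x = S.conj α := ⟨_, rfl⟩
  obtain ⟨P, hP⟩ : ∃ x, x = α * η := ⟨_, rfl⟩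
  obtain ⟨w, hw⟩ : ∃ x, x = S.d η - P := ⟨_, rfl⟩
  obtain ⟨T', hT'⟩ : ∃ x, x = S.conj Θ := ⟨_, rfl⟩
  -- helper lemmas
  have d_neg : ∀ a : S.A, S.d (-a) = -(S.d a) := fun a => by
    rw [← neg_one_smul ℂ a, S.d_smul, neg_one_smul]
  have d_sub : ∀ a b : S.A, S.d (a - b) = S.d a - S.d b := fun a b => by
    rw [sub_eq_add_neg, S.d_add, d_neg, sub_eq_add_neg]
  have conj_neg : ∀ a : S.A, S.conj (-a) = -(S.conj a) := fun a => by
    rw [← neg_one_smul ℂ a, S.conj_smul, map_neg, map_one, neg_one_smul]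
  have conj_sub : ∀ a b : S.A, S.conj (a - b) = S.conj a - S.conj b := fun a b => by
    rw [sub_eq_add_neg, S.conj_add, conj_neg, sub_eq_add_neg]
  have conj_zero : S.conj 0 = 0 := by
    have h : S.conj 0 = S.conj 0 + S.conj 0 := by rw [← S.conj_add, add_zero]
    exact (left_eq_add.mp h)
  -- degrees
  have hdα2 : S.deg 2 (S.d α) := S.deg_d 1 α hα
  have hdη2 : S.deg 2 (S.d η) := S.deg_d 1 η hη
  have hP2 : S.deg 2 P := by rw [hP]; exact S.deg_mul 1 1 α η hα hη
  have hw2 : S.deg 2 w := by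
    rw [hw, sub_eq_add_neg, ← neg_one_smul ℂ P]
    exact S.deg_add 2 _ _ hdη2 (S.deg_smul 2 _ _ hP2)
  have hdΘ3 : S.deg 3 (S.d Θ) := S.deg_d 2 Θ hΘ
  -- basic commutations
  have cαα : α * α = 0 := by
    have h := S.comm 1 1 α α hα hα
    simp only [mul_one, pow_one, neg_one_smul] at h
    have h3 : (2 : ℂ) • (α * α) = 0 := by
      rw [two_smul]; nth_rewrite 2 [h]; simp
    have h4 := congrArg (fun y => (2 : ℂ)⁻¹ • y) h3
    simpa [smul_smul] using h4
  have cηα : η * α = -(α * η) := by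
    have h := S.comm 1 1 η α hη hα
    simpa [neg_one_smul] using h
  have cαη : α * η = -(η * α) := by rw [cηα, neg_neg]
  have cαΘ : α * Θ = Θ * α := by
    have h := S.comm 1 2 α Θ hα hΘ
    simpa [neg_one_smul] using h
  have cηΘ : η * Θ = Θ * η := by
    have h := S.comm 1 2 η Θ hη hΘ
    simpa [neg_one_smul] using h
  have cwα : w * α = α * w := by
    have h := S.comm 2 1 w α hw2 hα
    simpa [neg_one_smul] using h
  have cPΘ : P * Θ = Θ * P := by
    have h := S.comm 2 2 P Θ hP2 hΘ
    norm_num at h; exact h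
  have cwΘ : w * Θ = Θ * w := by
    have h := S.comm 2 2 w Θ hw2 hΘ
    norm_num at h; exact h
  have cdαα : S.d α * α = α * S.d α := by
    have h := S.comm 2 1 (S.d α) α hdα2 hα
    simpa [neg_one_smul] using h
  -- structural identities
  have hdηPw : S.d η = P + w := by rw [hw]; abel
  have hβη : β * η = w := by
    have h : S.d η = P + β * η := by rw [e2, add_mul, ← hP, hβ]
    have h2 : P + w = P + β * η := by rw [← hdηPw, h]
    exact (add_left_cancel h2).symm
  have hconjP : S.conj P = w := by rw [hP, S.conj_mul, hηreal, ← hβ, hβη]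
  have hconjw : S.conj w = P := by
    rw [hw, conj_sub, S.conj_d, hηreal, hconjP, hdηPw]; abel
  have hαP : α * P = 0 := by rw [hP, ← mul_assoc, cαα, zero_mul]
  have hdP : S.d P = Θ * η - α * w := by
    have h1 : S.d P = S.d α * η - α * S.d η := by
      rw [hP, S.leibniz 1 α η hα]
      simp [neg_one_smul, sub_eq_add_neg]
    rw [h1, e1, hdηPw, mul_add, hαP, zero_add]
  have hdw : S.d w = -(S.d P) := by rw [hw, d_sub, S.d_d, zero_sub]
  have hαΘη : α * (Θ * η) = Θ * P := by rw [← mul_assoc, cαΘ, mul_assoc, ← hP]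
  have hααw : α * (α * w) = 0 := by rw [← mul_assoc, cαα, zero_mul]
  have hαdP : α * S.d P = Θ * P := by rw [hdP, mul_sub, hαΘη, hααw, sub_zero]
  have hβP : β * P = -(α * w) := by
    rw [hP, cαη, mul_neg, ← mul_assoc, hβη, cwα]
  have hαw : α * w = Θ * η - S.d P := by rw [hdP]; abel
  have hconjdP : S.conj (S.d P) = -(S.d P) := by rw [S.conj_d, hconjP, hdw]
  have hconjαw : S.conj (α * w) = -(α * w) := by
    rw [S.conj_mul, ← hβ, hconjw, hβP]
  have hconjT' : S.conj T' = Θ := by rw [hT', S.conj_conj]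
  have hT'η : T' * η = -(Θ * η) := by
    have h := congrArg S.conj hαw
    rw [hconjαw, conj_sub, S.conj_mul, hηreal, ← hT', hconjdP, sub_neg_eq_add] at h
    have hΘη' : Θ * η = α * w + S.d P := by rw [hdP]; abel
    rw [hΘη', neg_add, h]; abel
  have hβΘη : β * (Θ * η) = -(T' * w) := by
    have h0 : α * (T' * η) = -(Θ * P) := by rw [hT'η, mul_neg, hαΘη]
    have h := congrArg S.conj h0
    rw [S.conj_mul, S.conj_mul, hconjT', hηreal, ← hβ, conj_neg, S.conj_mul,
      ← hT', hconjP] at h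
    exact h
  have hβdP : β * S.d P = -(T' * w) := by
    have h := congrArg S.conj hαdP
    rw [S.conj_mul, ← hβ, hconjdP, S.conj_mul, ← hT', hconjP, mul_neg] at h
    rw [← neg_eq_iff_eq_neg.mpr h.symm]
  have hβαw : β * (α * w) = 0 := by
    rw [hαw, mul_sub, hβΘη, hβdP, sub_self]
  -- dΘ * η = 0
  have hdαw : S.d α * w = S.d Θ * η + Θ * w := by
    have h1 : S.d (α * w) = S.d α * w + Θ * P := by
      rw [S.leibniz 1 α w hα, hdw, mul_neg, hαdP]
      simp [neg_one_smul, sub_eq_add_neg]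
    have h2 : S.d (α * w) = S.d Θ * η + Θ * P + Θ * w := by
      rw [hαw, d_sub, S.d_d, sub_zero, S.leibniz 2 Θ η hΘ, hdηPw, mul_add]
      norm_num; abel
    have h4 : S.d α * w + Θ * P = S.d Θ * η + Θ * w + Θ * P := by
      rw [← h1, h2]; abel
    exact add_right_cancel h4
  have hdβη : S.d β * η = T' * η := by
    have h := congrArg S.conj e1
    rw [S.conj_mul, S.conj_mul, S.conj_d, hηreal, ← hβ, ← hT'] at h
    exact h
  have hdβP : S.d β * P = T' * P := by
    rw [hP, cαη, mul_neg, mul_neg, ← mul_assoc, ← mul_assoc, hdβη]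
  have hdT'η : S.d T' * η = 0 := by
    have h := congrArg S.conj hdαw
    rw [S.conj_mul, S.conj_d, ← hβ, hconjw, S.conj_add, S.conj_mul, S.conj_mul,
      S.conj_d, hηreal, ← hT', hconjw, hdβP] at h
    have h2 : (0 : S.A) + T' * P = S.d T' * η + T' * P := by
      rw [zero_add]; exact h
    exact (add_right_cancel h2).symm
  have hdΘη : S.d Θ * η = 0 := by
    have h := congrArg S.conj hdT'η
    rw [S.conj_mul, S.conj_d, hconjT', hηreal, conj_zero] at h
    exact h
  have hdΘP : S.d Θ * P = 0 := by
    rw [hP, cαη, mul_neg, ← mul_assoc, hdΘη, zero_mul, neg_zero]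
  -- powers of Θ commute with degree-even elements
  have powcomm : ∀ x : S.A, Θ * x = x * Θ → ∀ k : ℕ, Θ ^ k * x = x * Θ ^ k := by
    intro x hx k
    induction k with
    | zero => simp
    | succ k ih => rw [pow_succ, mul_assoc, hx, ← mul_assoc, ih, mul_assoc]
  have hαw3 : S.deg 3 (α * w) := by
    have := S.deg_mul 1 2 α w hα hw2
    exact this
  have cαwΘ : Θ * (α * w) = (α * w) * Θ := by
    have h := S.comm 3 2 (α * w) Θ hαw3 hΘ
    norm_num at h; exact h.symm
  have pcη : ∀ k : ℕ, Θ ^ k * η = η * Θ ^ k := powcomm η cηΘ.symm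
  have pcP : ∀ k : ℕ, Θ ^ k * P = P * Θ ^ k := powcomm P cPΘ.symm
  have pcαw : ∀ k : ℕ, Θ ^ k * (α * w) = (α * w) * Θ ^ k := powcomm (α * w) cαwΘ
  have pcα : ∀ k : ℕ, Θ ^ k * α = α * Θ ^ k := powcomm α cαΘ.symm
  -- the three αβ annihilation/commutation lemmas
  have hαβΘkη : ∀ k : ℕ, (α * β) * (Θ ^ k * η) = Θ ^ k * (α * w) := by
    intro k
    rw [pcη k, mul_assoc, ← mul_assoc β, hβη, ← mul_assoc, ← pcαw k]
  have hαβΘkP : ∀ k : ℕ, (α * β) * (Θ ^ k * P) = 0 := by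
    intro k
    rw [pcP k, mul_assoc, ← mul_assoc β, hβP, neg_mul, mul_neg, ← mul_assoc,
      ← mul_assoc, cαα, zero_mul, zero_mul, neg_zero]
  have hαβΘkαw : ∀ k : ℕ, (α * β) * (Θ ^ k * (α * w)) = 0 := by
    intro k
    rw [pcαw k, mul_assoc, ← mul_assoc β, hβαw, zero_mul, mul_zero]
  -- Ω in convenient form
  obtain ⟨c, hc⟩ : ∃ x : ℂ, x = 1 / ((l + 2 : ℕ) : ℂ) := ⟨_, rfl⟩
  have hΩ' : Ω = Complex.I • Θ - (c * Complex.I) • (α * β) := by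
    rw [hΩ, ← hβ, ← hc, smul_smul]
  have hΩmul : ∀ x y : S.A, (α * β) * x = y →
      Ω * x = Complex.I • (Θ * x) - (c * Complex.I) • y := by
    intro x y hxy
    rw [hΩ', sub_mul, smul_mul_assoc, smul_mul_assoc, hxy]
  have pΩP : ∀ k : ℕ, Ω ^ k * P = Complex.I ^ k • (Θ ^ k * P) := by
    intro k
    induction k with
    | zero => simp
    | succ k ih =>
      rw [pow_succ', mul_assoc, ih, mul_smul_comm,
        hΩmul (Θ ^ k * P) 0 (hαβΘkP k), smul_zero, sub_zero,
        ← mul_assoc, ← pow_succ', smul_smul, ← pow_succ]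
  have pΩη : ∀ k : ℕ, Ω ^ (k + 1) * η =
      Complex.I ^ (k + 1) • (Θ ^ (k + 1) * η
        - (((k : ℂ) + 1) * c) • (Θ ^ k * (α * w))) := by
    intro k
    induction k with
    | zero =>
      have h0 : (α * β) * η = α * w := by rw [mul_assoc, hβη]
      simp only [zero_add, pow_one, pow_zero, one_mul, Nat.cast_zero]
      rw [hΩmul η (α * w) h0]
      match_scalars <;> ring
    | succ k ih =>
      rw [pow_succ' Ω (k + 1), mul_assoc, ih, mul_smul_comm, mul_sub,
        hΩmul (Θ ^ (k + 1) * η) (Θ ^ (k + 1) * (α * w)) (hαβΘkη (k + 1)),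
        mul_smul_comm,
        hΩmul (Θ ^ k * (α * w)) 0 (hαβΘkαw k), smul_zero, sub_zero,
        ← mul_assoc Θ, ← pow_succ' Θ (k + 1), ← mul_assoc Θ, ← pow_succ' Θ k]
      match_scalars <;> ring
  -- degree of powers of Θ
  have degΘpow : ∀ k : ℕ, S.deg (2 * (k + 1)) (Θ ^ (k + 1)) := by
    intro k
    induction k with
    | zero => simpa using hΘ
    | succ k ih =>
      have h := S.deg_mul 2 (2 * (k + 1)) Θ (Θ ^ (k + 1)) hΘ ih
      rw [← pow_succ'] at h
      have : 2 + 2 * (k + 1) = 2 * (k + 1 + 1) := by ring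
      rwa [this] at h
  -- d(Θ^m) * P = 0
  have hdΘpowP : ∀ k : ℕ, S.d (Θ ^ (k + 1)) * P = 0 := by
    intro k
    induction k with
    | zero => simpa using hdΘP
    | succ k ih =>
      rw [pow_succ' Θ (k + 1), S.leibniz 2 Θ (Θ ^ (k + 1)) hΘ, add_mul,
        smul_mul_assoc, mul_assoc, pcP (k + 1), ← mul_assoc, hdΘP, zero_mul,
        mul_assoc, ih, mul_zero, smul_zero, add_zero]
  -- final assembly
  have hsub : l + 2 - 1 = l + 1 := by omega
  rw [hsub]
  have hIP : Complex.I • α * η = Complex.I • P := by rw [smul_mul_assoc, ← hP]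
  have hlhs : Ω ^ (l + 1) * (Complex.I • α * η)
      = Complex.I ^ (l + 2) • (Θ ^ (l + 1) * P) := by
    rw [hIP, mul_smul_comm, pΩP (l + 1), smul_smul, ← pow_succ']
  rw [hlhs, S.d_smul]
  have hdpow : S.d (Θ ^ (l + 1) * P)
      = Θ ^ (l + 2) * η - Θ ^ (l + 1) * (α * w) := by
    rw [S.leibniz (2 * (l + 1)) (Θ ^ (l + 1)) P (degΘpow l), hdΘpowP l,
      zero_add, hdP, mul_sub]
    have hsgn : ((-1 : ℂ)) ^ (2 * (l + 1)) = 1 := by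
      rw [pow_mul]; norm_num
    rw [hsgn, one_smul, ← mul_assoc, ← pow_succ]
  rw [hdpow, pΩη (l + 1)]
  have hcoef : (((l + 1 : ℕ) : ℂ) + 1) * c = 1 := by
    rw [hc]
    have hne : ((l + 2 : ℕ) : ℂ) ≠ 0 := Nat.cast_ne_zero.mpr (by omega)
    push_cast at hne ⊢
    field_simp
    ring
  rw [hcoef, one_smul]
end

section
/- Let M be a compact oriented smooth 3-manifold, α a smooth complex 1-form, Θ a smooth complex 2-form, and η a smooth real 1-form on M with dα ∧ η = Θ ∧ η and dη = (α + ᾱ) ∧ η. Then ∫_M iΘ ∧ η = ∫_M iα ∧ ᾱ ∧ η. -/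
/-- On a compact oriented smooth 3-manifold (encoded by the
form calculus `S` with its Stokes-type integral), if `α` is a smooth complex
1-form, `Θ` a smooth complex 2-form and `η` a smooth real 1-form with
`dα ∧ η = Θ ∧ η` and `dη = (α + ᾱ) ∧ η`, then
`∫_M iΘ ∧ η = ∫_M iα ∧ ᾱ ∧ η`. -/
theorem stmt_3 (S : FormCalculus)
    (α Θ η : S.A) (hα : S.deg 1 α) (hΘ : S.deg 2 Θ)
    (hη : S.deg 1 η) (hηreal : S.conj η = η)
    (e1 : S.d α * η = Θ * η)
    (e2 : S.d η = (α + S.conj α) * η) :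
    S.integral ((Complex.I • Θ) * η)
      = S.integral ((Complex.I • (α * S.conj α)) * η) := by
  -- α ∧ α = 0
  have hαα : α * α = 0 := by
    have h := S.comm 1 1 α α hα hα
    have h1 : α * α = -(α * α) := by nth_rewrite 1 [h]; simp
    have h2 : (2 : ℂ) • (α * α) = 0 := by rw [two_smul]; nth_rewrite 1 [h1]; exact neg_add_cancel _
    have h3 := congrArg (fun x => ((2 : ℂ)⁻¹) • x) h2
    simpa [smul_smul] using h3
  -- Leibniz + Stokes: ∫ dα ∧ η = ∫ α ∧ dη
  have hd : S.d (α * η) = S.d α * η + (-1 : ℂ) • (α * S.d η) := by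
    simpa using S.leibniz 1 α η hα
  have hst : S.integral (S.d α * η) + S.integral ((-1 : ℂ) • (α * S.d η)) = 0 := by
    rw [← S.integral_add, ← hd, S.stokes]
  rw [S.integral_smul] at hst
  have hkey : S.integral (S.d α * η) = S.integral (α * S.d η) := by
    linear_combination hst
  -- compute α ∧ dη
  have h4 : α * S.d η = α * S.conj α * η := by
    rw [e2, add_mul, mul_add, ← mul_assoc, ← mul_assoc, hαα, zero_mul, zero_add]
  have h5 : S.integral (Θ * η) = S.integral (α * S.conj α * η) := by
    rw [← e1, hkey, h4]
  calc S.integral ((Complex.I • Θ) * η)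
      = Complex.I * S.integral (Θ * η) := by
        rw [smul_mul_assoc, S.integral_smul]
    _ = Complex.I * S.integral (α * S.conj α * η) := by rw [h5]
    _ = S.integral ((Complex.I • (α * S.conj α)) * η) := by
        rw [smul_mul_assoc, S.integral_smul]
end

section
/- Let M be a compact oriented smooth (2n+1)-manifold with n ≥ 1, α a smooth complex 1-form, Θ a smooth complex 2-form, and η a smooth nowhere-vanishing real 1-form on M satisfying dα ∧ η = Θ ∧ η and dη = (α + ᾱ) ∧ η. Then the top-degree form (iΘ − (1/n) iα ∧ ᾱ)^n ∧ η cannot be a positive volume form on M. -/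
section AuxLemmas

variable (S : FormCalculus)

private lemma conj_zero' : S.conj 0 = 0 := by
  have h := S.conj_smul 0 0
  simpa using h

private lemma conj_neg' (x : S.A) : S.conj (-x) = -S.conj x := by
  have h := S.conj_smul (-1) x
  simpa using h

private lemma comm_odd (a b : S.A) (ha : S.deg 1 a) (hb : S.deg 1 b) :
    a * b = -(b * a) := by
  have h := S.comm 1 1 a b ha hb
  simpa using h

private lemma comm_two (j : ℕ) (a b : S.A) (ha : S.deg 2 a) (hb : S.deg j b) :
    a * b = b * a := by
  have h := S.comm 2 j a b ha hb
  have h2 : ((-1 : ℂ)) ^ (2 * j) = 1 := by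
    rw [pow_mul]; norm_num
  rw [h2, one_smul] at h
  exact h

private lemma comm_two' (j : ℕ) (a b : S.A) (ha : S.deg j a) (hb : S.deg 2 b) :
    a * b = b * a := by
  have h := S.comm j 2 a b ha hb
  have h2 : ((-1 : ℂ)) ^ (j * 2) = 1 := by
    rw [mul_comm, pow_mul]; norm_num
  rw [h2, one_smul] at h
  exact h

private lemma sq_zero_of_deg_one (a : S.A) (ha : S.deg 1 a) : a * a = 0 := by
  have h : a * a = -(a * a) := comm_odd S a a ha ha
  have h2 : (2 : ℂ) • (a * a) = 0 := by
    rw [two_smul]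
    nth_rewrite 1 [h]
    abel
  calc a * a = ((2 : ℂ)⁻¹ * 2) • (a * a) := by norm_num
  _ = (2 : ℂ)⁻¹ • ((2 : ℂ) • (a * a)) := by rw [mul_smul]
  _ = 0 := by rw [h2, smul_zero]

private lemma pow_comm' (t : S.A) (ht : S.deg 2 t) (j : ℕ) (x : S.A) (hx : S.deg j x) :
    ∀ k : ℕ, t ^ k * x = x * t ^ k := by
  intro k
  induction k with
  | zero => simp
  | succ k ih =>
    calc t ^ (k+1) * x = t ^ k * (t * x) := by rw [pow_succ, mul_assoc]
    _ = t ^ k * (x * t) := by rw [comm_two S j t x ht hx]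
    _ = (t ^ k * x) * t := by rw [mul_assoc]
    _ = (x * t ^ k) * t := by rw [ih]
    _ = x * t ^ (k+1) := by rw [mul_assoc, ← pow_succ]

private lemma d_pow_mul (t : S.A) (ht : S.deg 2 t) (hdt : S.d t = 0) :
    ∀ (k : ℕ) (x : S.A), S.d (t ^ k * x) = t ^ k * S.d x := by
  intro k
  induction k with
  | zero => intro x; simp
  | succ k ih =>
    intro x
    have h1 : t ^ (k+1) * x = t ^ k * (t * x) := by rw [pow_succ, mul_assoc]
    have h2 : S.d (t * x) = t * S.d x := by
      have h := S.leibniz 2 t x ht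
      simpa [hdt] using h
    rw [h1, ih (t * x), h2, ← mul_assoc, ← pow_succ]

end AuxLemmas

section MainAux

variable (S : FormCalculus)

private theorem aux_integral (n : ℕ) (hn : 1 ≤ n)
    (α Θ η : S.A) (hα : S.deg 1 α) (hΘ : S.deg 2 Θ)
    (hη : S.deg 1 η) (hηreal : S.conj η = η)
    (e1 : S.d α * η = Θ * η)
    (e2 : S.d η = (α + S.conj α) * η) :
    S.integral
      ((Complex.I • Θ - (1 / (n : ℂ)) • (Complex.I • (α * S.conj α))) ^ n * η) = 0 := by
  obtain ⟨m, rfl⟩ : ∃ m, n = m + 1 := ⟨n - 1, (Nat.succ_pred_eq_of_pos hn).symm⟩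
  set α' := S.conj α with hα'
  set T := S.d α with hT
  set μ := S.d η with hμ
  set c : ℂ := -((1 / ((m+1 : ℕ) : ℂ)) * Complex.I) with hc
  set b : S.A := Complex.I • Θ - (1 / ((m+1 : ℕ) : ℂ)) • (Complex.I • (α * α')) with hb
  have hb' : b = Complex.I • Θ + c • (α * α') := by
    rw [hb, hc, sub_eq_add_neg, smul_smul, ← neg_smul]
  -- degrees
  have degT : S.deg 2 T := S.deg_d 1 α hα
  have degμ : S.deg 2 μ := S.deg_d 1 η hη
  have degαμ : S.deg 3 (α * μ) := S.deg_mul 1 2 α μ hα degμ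
  -- basic identities
  have aa : α * α = 0 := sq_zero_of_deg_one S α hα
  have a'a' : α' * α' = 0 := by
    rw [hα', ← S.conj_mul, aa, conj_zero']
  have αη : α * η = -(η * α) := comm_odd S α η hα hη
  have ηα : η * α = -(α * η) := comm_odd S η α hη hα
  have ηα' : η * α' = -(α' * η) := by
    have h1 : S.conj (η * α) = η * α' := by rw [S.conj_mul, hηreal]
    have h2 : S.conj (η * α) = -(α' * η) := by
      rw [ηα, conj_neg', S.conj_mul, hηreal]
    rw [← h1, h2]
  have α'η : α' * η = -(η * α') := by rw [ηα', neg_neg]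
  have αμc : α * μ = μ * α := comm_two' S 1 α μ hα degμ
  have μexp : μ = α * η + α' * η := by rw [e2, add_mul]
  have a'ηexp : α' * η = μ - α * η := by rw [μexp]; abel
  have a'αη : α' * (α * η) = -(α * μ) := by
    calc α' * (α * η) = α' * (-(η * α)) := by rw [αη]
    _ = -((α' * η) * α) := by noncomm_ring
    _ = -((μ - α * η) * α) := by rw [a'ηexp]
    _ = -(μ * α) + α * (η * α) := by noncomm_ring
    _ = -(μ * α) + α * (-(α * η)) := by rw [ηα]
    _ = -(μ * α) - (α * α) * η := by noncomm_ring
    _ = -(α * μ) := by rw [aa, zero_mul, sub_zero, αμc]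
  have a'μ : α' * μ = -(α * μ) := by
    calc α' * μ = α' * (α * η) + α' * (α' * η) := by rw [μexp, mul_add]
    _ = -(α * μ) + (α' * α') * η := by rw [a'αη, mul_assoc]
    _ = -(α * μ) := by rw [a'a', zero_mul, add_zero]
  have a'αμ : α' * (α * μ) = 0 := by
    have h : α * μ = -(α' * μ) := by rw [a'μ, neg_neg]
    rw [h, mul_neg, ← mul_assoc, a'a', zero_mul, neg_zero]
  have Θμ : Θ * μ = T * μ := by
    have h1 : Θ * (α * η) = T * (α * η) := by
      calc Θ * (α * η) = (Θ * α) * η := by noncomm_ring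
      _ = (α * Θ) * η := by rw [comm_two S 1 Θ α hΘ hα]
      _ = α * (Θ * η) := by noncomm_ring
      _ = α * (T * η) := by rw [← e1]
      _ = (T * α) * η := by rw [comm_two S 1 T α degT hα]; noncomm_ring
      _ = T * (α * η) := by noncomm_ring
    have h2 : Θ * (α' * η) = T * (α' * η) := by
      calc Θ * (α' * η) = Θ * (-(η * α')) := by rw [α'η]
      _ = -((Θ * η) * α') := by noncomm_ring
      _ = -((T * η) * α') := by rw [← e1]
      _ = T * (-(η * α')) := by noncomm_ring
      _ = T * (α' * η) := by rw [α'η]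
    calc Θ * μ = Θ * (α * η) + Θ * (α' * η) := by rw [μexp, mul_add]
    _ = T * (α * η) + T * (α' * η) := by rw [h1, h2]
    _ = T * μ := by rw [← mul_add, ← μexp]
  -- power lemmas
  have powηcomm : ∀ k, T ^ k * η = η * T ^ k := pow_comm' S T degT 1 η hη
  have powαμcomm : ∀ k, T ^ k * (α * μ) = (α * μ) * T ^ k :=
    pow_comm' S T degT 3 (α * μ) degαμ
  have dT : S.d T = 0 := S.d_d α
  have dpow : ∀ (k : ℕ) (x : S.A), S.d (T ^ k * x) = T ^ k * S.d x :=
    d_pow_mul S T degT dT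
  -- the two structure lemmas
  have LA : ∀ k, b * (T ^ k * η) =
      Complex.I • (T ^ (k+1) * η) + c • (T ^ k * (α * μ)) := by
    intro k
    rw [hb', add_mul, smul_mul_assoc, smul_mul_assoc]
    have h1 : Θ * (T ^ k * η) = T ^ (k+1) * η := by
      calc Θ * (T ^ k * η) = Θ * (η * T ^ k) := by rw [powηcomm]
      _ = (Θ * η) * T ^ k := by noncomm_ring
      _ = (T * η) * T ^ k := by rw [← e1]
      _ = T * (η * T ^ k) := by noncomm_ring
      _ = T * (T ^ k * η) := by rw [powηcomm]
      _ = (T * T ^ k) * η := by noncomm_ring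
      _ = T ^ (k+1) * η := by rw [← pow_succ']
    have h2 : (α * α') * (T ^ k * η) = T ^ k * (α * μ) := by
      calc (α * α') * (T ^ k * η) = (α * α') * (η * T ^ k) := by rw [powηcomm]
      _ = (α * (α' * η)) * T ^ k := by noncomm_ring
      _ = (α * (μ - α * η)) * T ^ k := by rw [a'ηexp]
      _ = (α * μ) * T ^ k - ((α * α) * η) * T ^ k := by noncomm_ring
      _ = (α * μ) * T ^ k := by rw [aa, zero_mul, zero_mul, sub_zero]
      _ = T ^ k * (α * μ) := by rw [← powαμcomm]
    rw [h1, h2]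
  have LB : ∀ k, b * (T ^ k * (α * μ)) = Complex.I • (T ^ (k+1) * (α * μ)) := by
    intro k
    rw [hb', add_mul, smul_mul_assoc, smul_mul_assoc]
    have hΘαμ : Θ * (α * μ) = T * (α * μ) := by
      calc Θ * (α * μ) = (α * Θ) * μ := by rw [← comm_two S 1 Θ α hΘ hα]; noncomm_ring
      _ = α * (Θ * μ) := by noncomm_ring
      _ = α * (T * μ) := by rw [Θμ]
      _ = (T * α) * μ := by rw [comm_two S 1 T α degT hα]; noncomm_ring
      _ = T * (α * μ) := by noncomm_ring
    have h1 : Θ * (T ^ k * (α * μ)) = T ^ (k+1) * (α * μ) := by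
      calc Θ * (T ^ k * (α * μ)) = Θ * ((α * μ) * T ^ k) := by rw [powαμcomm]
      _ = (Θ * (α * μ)) * T ^ k := by noncomm_ring
      _ = (T * (α * μ)) * T ^ k := by rw [hΘαμ]
      _ = T * ((α * μ) * T ^ k) := by noncomm_ring
      _ = T * (T ^ k * (α * μ)) := by rw [powαμcomm]
      _ = (T * T ^ k) * (α * μ) := by noncomm_ring
      _ = T ^ (k+1) * (α * μ) := by rw [← pow_succ']
    have h2 : (α * α') * (T ^ k * (α * μ)) = 0 := by
      calc (α * α') * (T ^ k * (α * μ)) = (α * α') * ((α * μ) * T ^ k) := by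
            rw [powαμcomm]
      _ = α * ((α' * (α * μ)) * T ^ k) := by noncomm_ring
      _ = 0 := by rw [a'αμ, zero_mul, mul_zero]
    rw [h1, h2, smul_zero, add_zero]
  -- main induction
  have key : ∀ k : ℕ, b ^ (k+1) * η =
      (Complex.I ^ (k+1)) • (T ^ (k+1) * η)
        + (((k : ℂ) + 1) * Complex.I ^ k * c) • (T ^ k * (α * μ)) := by
    intro k
    induction k with
    | zero =>
      have h0 : T ^ 0 * η = η := by rw [pow_zero, one_mul]
      have h := LA 0
      rw [h0] at h
      rw [pow_one, h]
      norm_num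
    | succ k ih =>
      have hsplit : b ^ (k+2) * η = b * (b ^ (k+1) * η) := by
        rw [pow_succ', mul_assoc]
      rw [hsplit, ih, mul_add, mul_smul_comm, mul_smul_comm, LA (k+1), LB k]
      push_cast
      module
  -- the primitive
  have hdαη : S.d (α * η) = T * η - α * μ := by
    have h := S.leibniz 1 α η hα
    simpa [sub_eq_add_neg] using h
  have hd : S.d (T ^ m * (α * η)) = T ^ (m+1) * η - T ^ m * (α * μ) := by
    rw [dpow m (α * η), hdαη, mul_sub, ← mul_assoc, ← pow_succ]
  have hcoef : ((m : ℂ) + 1) * Complex.I ^ m * c = -(Complex.I ^ (m+1)) := by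
    rw [hc]
    have hne : ((m : ℂ) + 1) ≠ 0 := Nat.cast_add_one_ne_zero m
    push_cast
    field_simp
    ring
  have hfinal : b ^ (m+1) * η = Complex.I ^ (m+1) • S.d (T ^ m * (α * η)) := by
    rw [key m, hcoef, hd, smul_sub, neg_smul, ← sub_eq_add_neg]
  rw [hfinal, S.integral_smul, S.stokes, mul_zero]

end MainAux

/-- On a compact oriented smooth `(2n+1)`-manifold with
`n ≥ 1` (encoded by the form calculus `S`), if `α` is a smooth complex 1-form,
`Θ` a smooth complex 2-form and `η` a smooth nowhere-vanishing real 1-form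
with `dα ∧ η = Θ ∧ η` and `dη = (α + ᾱ) ∧ η`, then the top-degree form
`(iΘ − (1/n) iα ∧ ᾱ)^n ∧ η` cannot be a positive volume form. -/
theorem stmt_4 (S : FormCalculus) (n : ℕ) (hn : 1 ≤ n)
    (α Θ η : S.A) (hα : S.deg 1 α) (hΘ : S.deg 2 Θ)
    (hη : S.deg 1 η) (hηreal : S.conj η = η)
    (hηnv : S.nonvanishing η)
    (e1 : S.d α * η = Θ * η)
    (e2 : S.d η = (α + S.conj α) * η) :
    ¬ S.pos
      ((Complex.I • Θ - (1 / (n : ℂ)) • (Complex.I • (α * S.conj α))) ^ n * η) := by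
  intro hpos
  have h0 := S.pos_integral _ hpos
  have hz := aux_integral S n hn α Θ η hα hΘ hη hηreal e1 e2
  rw [hz] at h0
  simp at h0
end

section
/- Let Θ be a 2-form, α a complex 1-form, and η a real 1-form on a (2n+1)-manifold with n ≥ 2, satisfying dα ∧ η = Θ ∧ η and dη = (α+ᾱ) ∧ η. Set Ω = iΘ − (1/n) iα ∧ ᾱ. Then d(Ω^{n−1} ∧ iα ∧ η) = (n−1) Ω^{n−2} ∧ (1/n) iΘ ∧ iα ∧ ᾱ ∧ η + Ω^{n−1} ∧ (iΘ − iα ∧ ᾱ) ∧ η. -/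
/-- On a `(2n+1)`-manifold with `n ≥ 2`, if
`dα ∧ η = Θ ∧ η` and `dη = (α + ᾱ) ∧ η`, then with
`Ω = iΘ − (1/n) iα ∧ ᾱ`,
`d(Ω^{n−1} ∧ iα ∧ η)
  = (n−1) Ω^{n−2} ∧ (1/n) iΘ ∧ iα ∧ ᾱ ∧ η + Ω^{n−1} ∧ (iΘ − iα ∧ ᾱ) ∧ η`. -/

theorem stmt_15 (S : FormCalculus) (n : ℕ) (hn : 2 ≤ n)
    (α Θ η : S.A) (hα : S.deg 1 α) (hΘ : S.deg 2 Θ)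
    (hη : S.deg 1 η) (hηreal : S.conj η = η)
    (e1 : S.d α * η = Θ * η)
    (e2 : S.d η = (α + S.conj α) * η)
    (Ω : S.A)
    (hΩ : Ω = Complex.I • Θ - (1 / (n : ℂ)) • (Complex.I • (α * S.conj α))) :
    S.d (Ω ^ (n - 1) * ((Complex.I • α) * η))
      = ((n : ℂ) - 1) •
          (Ω ^ (n - 2) *
            ((1 / (n : ℂ)) •
              ((Complex.I • Θ) * (Complex.I • (α * S.conj α)))) * η)
        + Ω ^ (n - 1) * ((Complex.I • Θ - Complex.I • (α * S.conj α)) * η) := by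
  obtain ⟨m, rfl⟩ : ∃ m, n = m + 2 := ⟨n - 2, by omega⟩
  have hsub1 : m + 2 - 1 = m + 1 := rfl
  have hsub2 : m + 2 - 2 = m := rfl
  rw [hsub1, hsub2]
  -- basic scalar cancellation
  have half_cancel : ∀ x : S.A, x + x = 0 → x = 0 := by
    intro x hx
    have h1 : x = (2:ℂ)⁻¹ • (x + x) := by
      rw [← two_smul ℂ x, smul_smul]; norm_num
    rw [hx, smul_zero] at h1; exact h1
  -- α * α = 0
  have hαα : α * α = 0 := by
    have h := S.comm 1 1 α α hα hα
    have hpow : ((-1:ℂ)^(1*1)) = -1 := by norm_num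
    rw [hpow, neg_smul, one_smul] at h
    exact half_cancel _ (eq_neg_iff_add_eq_zero.mp h)
  -- conj 0 = 0  and  ᾱ * ᾱ = 0
  have hconj0 : S.conj 0 = 0 := by
    have h := S.conj_add 0 0
    rw [add_zero] at h
    exact (left_eq_add.mp h)
  have hcc : S.conj α * S.conj α = 0 := by
    rw [← S.conj_mul, hαα]; exact hconj0
  -- degree facts
  have hdη2 : S.deg 2 (S.d η) := S.deg_d 1 η hη
  have hdα2 : S.deg 2 (S.d α) := S.deg_d 1 α hα
  have hαη2 : S.deg 2 (α * η) := S.deg_mul 1 1 α η hα hη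
  have hB2 : S.deg 2 (S.d η - α * η) := by
    have h1 : S.deg 2 ((-1:ℂ) • (α * η)) := S.deg_smul 2 (-1) _ hαη2
    have h2 := S.deg_add 2 _ _ hdη2 h1
    rwa [neg_one_smul, ← sub_eq_add_neg] at h2
  have hdΘ3 : S.deg 3 (S.d Θ) := S.deg_d 2 Θ hΘ
  -- commutation facts
  have commE : ∀ (j k : ℕ) (a b : S.A), S.deg j a → S.deg k b → Even (j * k) →
      a * b = b * a := by
    intro j k a b ha hb he
    have h := S.comm j k a b ha hb
    rwa [he.neg_one_pow, one_smul] at h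
  have cηα : η * α = -(α * η) := by
    have h := S.comm 1 1 η α hη hα
    have hpow : ((-1:ℂ)^(1*1)) = -1 := by norm_num
    rwa [hpow, neg_smul, one_smul] at h
  have cαη : α * η = -(η * α) := by rw [cηα, neg_neg]
  have cdηα : S.d η * α = α * S.d η := commE 2 1 _ _ hdη2 hα (by decide)
  have cηdα : η * S.d α = S.d α * η := commE 1 2 _ _ hη hdα2 (by decide)
  have cηΘ : η * Θ = Θ * η := commE 1 2 _ _ hη hΘ (by decide)
  have cαΘ : α * Θ = Θ * α := commE 1 2 _ _ hα hΘ (by decide)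
  have cdαα : S.d α * α = α * S.d α := commE 2 1 _ _ hdα2 hα (by decide)
  have cdηΘ : S.d η * Θ = Θ * S.d η := commE 2 2 _ _ hdη2 hΘ (by decide)
  have cdΘΘ : S.d Θ * Θ = Θ * S.d Θ := commE 3 2 _ _ hdΘ3 hΘ (by decide)
  have cdΘα : S.d Θ * α = -(α * S.d Θ) := by
    have h := S.comm 3 1 _ _ hdΘ3 hα
    have hpow : ((-1:ℂ)^(3*1)) = -1 := by norm_num
    rwa [hpow, neg_smul, one_smul] at h
  have cBdα : (S.d η - α * η) * S.d α = S.d α * (S.d η - α * η) :=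
    commE 2 2 _ _ hB2 hdα2 (by decide)
  -- power commutation
  have powComm : ∀ (x : S.A), x * Θ = Θ * x → ∀ j, x * Θ ^ j = Θ ^ j * x := by
    intro x hx j
    induction j with
    | zero => simp
    | succ k ih => rw [pow_succ, ← mul_assoc, ih, mul_assoc, hx, ← mul_assoc]
  have pαΘ := powComm α cαΘ
  have pηΘ := powComm η cηΘ
  have pdηΘ := powComm (S.d η) cdηΘ
  have pdΘΘ := powComm (S.d Θ) cdΘΘ
  -- ᾱ * η = dη - α η
  have e2' : S.d η = α * η + S.conj α * η := by rw [e2, add_mul]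
  have hbar : S.conj α * η = S.d η - α * η := by rw [e2']; abel
  -- α * (dη - αη) = α * dη
  have hαB : α * (S.d η - α * η) = α * S.d η := by
    rw [mul_sub, ← mul_assoc, hαα, zero_mul, sub_zero]
  -- (αη) * α = 0
  have hαηα : (α * η) * α = 0 := by
    rw [mul_assoc, cηα, mul_neg, ← mul_assoc, hαα, zero_mul, neg_zero]
  -- flip identity : (dη - αη) * dα = (dη - αη) * Θ
  have hBflip : (S.d η - α * η) * S.d α = (S.d η - α * η) * Θ := by
    have h1 : (S.conj α * η) * S.d α = (S.conj α * η) * Θ := by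
      rw [mul_assoc, cηdα, e1, ← cηΘ, ← mul_assoc]
    rwa [hbar] at h1
  -- ᾱ * (α * η) = -(α * dη)
  have hG : S.conj α * (α * η) = -(α * S.d η) := by
    calc S.conj α * (α * η) = S.conj α * (-(η * α)) := by rw [cαη]
    _ = -((S.conj α * η) * α) := by rw [mul_neg, mul_assoc]
    _ = -((S.d η - α * η) * α) := by rw [hbar]
    _ = -(S.d η * α - (α * η) * α) := by rw [sub_mul]
    _ = -(α * S.d η) := by rw [cdηα, hαηα, sub_zero]
  -- ᾱ * dη = -(α * dη)
  have hcαdη : S.conj α * S.d η = -(α * S.d η) := by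
    calc S.conj α * S.d η = S.conj α * (α * η + S.conj α * η) := by rw [← e2']
    _ = S.conj α * (α * η) + S.conj α * (S.conj α * η) := by rw [mul_add]
    _ = -(α * S.d η) := by rw [hG, ← mul_assoc, hcc, zero_mul, add_zero]
  -- α * (dη * (Θ^j * α)) = 0
  have hQ0 : ∀ j, α * (S.d η * (Θ ^ j * α)) = 0 := by
    intro j
    calc α * (S.d η * (Θ ^ j * α)) = α * ((S.d η * Θ ^ j) * α) := by rw [mul_assoc]
    _ = α * ((Θ ^ j * S.d η) * α) := by rw [pdηΘ]
    _ = α * (Θ ^ j * (S.d η * α)) := by rw [mul_assoc]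
    _ = α * (Θ ^ j * (α * S.d η)) := by rw [cdηα]
    _ = (α * Θ ^ j) * (α * S.d η) := by rw [mul_assoc]
    _ = (Θ ^ j * α) * (α * S.d η) := by rw [pαΘ]
    _ = Θ ^ j * (α * (α * S.d η)) := by rw [mul_assoc]
    _ = Θ ^ j * ((α * α) * S.d η) := by rw [← mul_assoc α α]
    _ = 0 := by rw [hαα, zero_mul, mul_zero]
  -- L1 : K * (Θ^j * (α*η)) = 0
  have hL1 : ∀ j, (α * S.conj α) * (Θ ^ j * (α * η)) = 0 := by
    intro j
    have h1 : Θ ^ j * (α * η) = -(η * (Θ ^ j * α)) := by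
      calc Θ ^ j * (α * η) = Θ ^ j * (-(η * α)) := by rw [cαη]
      _ = -((Θ ^ j * η) * α) := by rw [mul_neg, mul_assoc]
      _ = -((η * Θ ^ j) * α) := by rw [pηΘ]
      _ = -(η * (Θ ^ j * α)) := by rw [mul_assoc]
    calc (α * S.conj α) * (Θ ^ j * (α * η))
        = α * (S.conj α * (-(η * (Θ ^ j * α)))) := by rw [mul_assoc, h1]
    _ = -(α * ((S.conj α * η) * (Θ ^ j * α))) := by rw [mul_neg, mul_neg, mul_assoc]
    _ = -(α * ((S.d η - α * η) * (Θ ^ j * α))) := by rw [hbar]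
    _ = -(α * (S.d η * (Θ ^ j * α)) - α * ((α * η) * (Θ ^ j * α))) := by
          rw [sub_mul, mul_sub]
    _ = -(0 - (α * α) * (η * (Θ ^ j * α))) := by
          rw [hQ0, mul_assoc α η, ← mul_assoc α α]
    _ = 0 := by rw [hαα, zero_mul, zero_sub, neg_neg]
  -- L2 : K * (Θ^j * η) = Θ^j * (α * dη)
  have hL2 : ∀ j, (α * S.conj α) * (Θ ^ j * η) = Θ ^ j * (α * S.d η) := by
    intro j
    calc (α * S.conj α) * (Θ ^ j * η) = (α * S.conj α) * (η * Θ ^ j) := by rw [pηΘ]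
    _ = α * ((S.conj α * η) * Θ ^ j) := by rw [mul_assoc, ← mul_assoc (S.conj α)]
    _ = α * ((S.d η - α * η) * Θ ^ j) := by rw [hbar]
    _ = (α * (S.d η - α * η)) * Θ ^ j := by rw [mul_assoc]
    _ = (α * S.d η) * Θ ^ j := by rw [hαB]
    _ = α * (Θ ^ j * S.d η) := by rw [mul_assoc, pdηΘ]
    _ = (α * Θ ^ j) * S.d η := by rw [mul_assoc]
    _ = (Θ ^ j * α) * S.d η := by rw [pαΘ]
    _ = Θ ^ j * (α * S.d η) := by rw [mul_assoc]
  -- L3 : K * (Θ^j * (α * dη)) = 0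
  have hL3 : ∀ j, (α * S.conj α) * (Θ ^ j * (α * S.d η)) = 0 := by
    intro j
    have h2 : Θ ^ j * (α * S.d η) = S.d η * (Θ ^ j * α) := by
      rw [← cdηα, ← mul_assoc, ← pdηΘ, mul_assoc]
    calc (α * S.conj α) * (Θ ^ j * (α * S.d η))
        = α * (S.conj α * (S.d η * (Θ ^ j * α))) := by rw [mul_assoc, h2]
    _ = α * ((S.conj α * S.d η) * (Θ ^ j * α)) := by rw [← mul_assoc (S.conj α)]
    _ = -(α * ((α * S.d η) * (Θ ^ j * α))) := by rw [hcαdη, neg_mul, mul_neg]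
    _ = -(α * (α * (S.d η * (Θ ^ j * α)))) := by rw [mul_assoc α (S.d η)]
    _ = -((α * α) * (S.d η * (Θ ^ j * α))) := by rw [← mul_assoc α α]
    _ = 0 := by rw [hαα, zero_mul, neg_zero]
  -- K * η = α * dη
  have hKη : (α * S.conj α) * η = α * S.d η := by rw [mul_assoc, hbar, hαB]
  -- degrees of powers
  have hdegP : ∀ j, S.deg (2 * (j + 1)) (Θ ^ (j + 1)) := by
    intro j
    induction j with
    | zero => simpa using hΘ
    | succ k ih =>
      have h := S.deg_mul 2 (2 * (k + 1)) Θ (Θ ^ (k + 1)) hΘ ih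
      have h2 : 2 + 2 * (k + 1) = 2 * (k + 1 + 1) := by ring
      rw [h2] at h
      rwa [← pow_succ'] at h
  -- d of powers
  have hdP : ∀ j : ℕ, S.d (Θ ^ (j + 1)) = ((j : ℂ) + 1) • (Θ ^ j * S.d Θ) := by
    intro j
    induction j with
    | zero => rw [pow_one, pow_zero, one_mul]; norm_num
    | succ k ih =>
      rw [pow_succ' Θ (k + 1), S.leibniz 2 Θ _ hΘ, ih]
      have hpow : ((-1:ℂ)^2) = 1 := by norm_num
      rw [hpow, one_smul, mul_smul_comm, ← mul_assoc, ← pow_succ', pdΘΘ]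
      push_cast
      module
  -- dΘ * η = dα * dη - Θ * dη
  have hdΘη : S.d Θ * η = S.d α * S.d η - Θ * S.d η := by
    have h1 := congrArg S.d e1
    rw [S.leibniz 2 (S.d α) η hdα2, S.leibniz 2 Θ η hΘ, S.d_d] at h1
    have hpow : ((-1:ℂ)^2) = 1 := by norm_num
    rw [hpow, one_smul, one_smul, zero_mul, zero_add] at h1
    rw [h1]; abel
  -- E : α * (dα * dη) = Θ * (α * dη)
  have hE : α * (S.d α * S.d η) = Θ * (α * S.d η) := by
    have hd : S.d η = α * η + (S.d η - α * η) := by abel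
    calc α * (S.d α * S.d η)
        = α * (S.d α * (α * η)) + α * (S.d α * (S.d η - α * η)) := by
          rw [← mul_add, ← mul_add, ← hd]
    _ = α * ((α * S.d α) * η) + α * ((S.d η - α * η) * S.d α) := by
          rw [← mul_assoc (S.d α) α, cdαα, ← cBdα]
    _ = (α * α) * (S.d α * η) + α * ((S.d η - α * η) * Θ) := by
          rw [mul_assoc α (S.d α), ← mul_assoc α α, hBflip]
    _ = (α * (S.d η - α * η)) * Θ := by rw [hαα, zero_mul, zero_add, mul_assoc]
    _ = (α * S.d η) * Θ := by rw [hαB]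
    _ = (α * Θ) * S.d η := by rw [mul_assoc, cdηΘ, ← mul_assoc]
    _ = Θ * (α * S.d η) := by rw [cαΘ, mul_assoc]
  have hαΘdη : α * (Θ * S.d η) = Θ * (α * S.d η) := by
    rw [← mul_assoc, cαΘ, mul_assoc]
  -- dΘ * (α * η) = 0
  have hdΘαη : S.d Θ * (α * η) = 0 := by
    calc S.d Θ * (α * η) = (S.d Θ * α) * η := by rw [mul_assoc]
    _ = -(α * (S.d Θ * η)) := by rw [cdΘα, neg_mul, mul_assoc]
    _ = -(α * (S.d α * S.d η) - α * (Θ * S.d η)) := by rw [hdΘη, mul_sub]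
    _ = -(Θ * (α * S.d η) - Θ * (α * S.d η)) := by
          rw [hE, hαΘdη]
    _ = 0 := by rw [sub_self, neg_zero]
  -- main d computation
  have hdT : S.d (Θ ^ (m + 1) * (α * η))
      = Θ ^ (m + 2) * η - Θ ^ (m + 1) * (α * S.d η) := by
    rw [S.leibniz (2 * (m + 1)) (Θ ^ (m + 1)) (α * η) (hdegP m)]
    have hev : ((-1:ℂ) ^ (2 * (m + 1))) = 1 := (even_two_mul (m + 1)).neg_one_pow
    rw [hev, one_smul, hdP m, smul_mul_assoc, mul_assoc, hdΘαη, mul_zero,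
      smul_zero, zero_add, S.leibniz 1 α η hα, e1]
    have h1 : ((-1:ℂ) ^ 1) = -1 := by norm_num
    rw [h1, neg_smul, one_smul, ← sub_eq_add_neg, mul_sub, ← mul_assoc,
      ← pow_succ]
  -- Ω multiplication
  have hΩx : ∀ x : S.A, Ω * x
      = Complex.I • (Θ * x)
        - (1 / ((m + 2 : ℕ) : ℂ)) • (Complex.I • ((α * S.conj α) * x)) := by
    intro x
    rw [hΩ, sub_mul, smul_mul_assoc, smul_mul_assoc, smul_mul_assoc]
  -- P1
  have hP1 : ∀ j, Ω ^ j * (α * η) = (Complex.I) ^ j • (Θ ^ j * (α * η)) := by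
    intro j
    induction j with
    | zero => simp
    | succ k ih =>
      rw [pow_succ' Ω k, mul_assoc, ih, mul_smul_comm, hΩx, hL1 k, smul_zero,
        smul_zero, sub_zero, ← mul_assoc, ← pow_succ', smul_smul, ← pow_succ]
  -- P3
  have hP3 : ∀ j l, Ω ^ j * (Θ ^ l * (α * S.d η))
      = (Complex.I) ^ j • (Θ ^ (j + l) * (α * S.d η)) := by
    intro j
    induction j with
    | zero => intro l; simp
    | succ k ih =>
      intro l
      rw [pow_succ' Ω k, mul_assoc, ih l, mul_smul_comm, hΩx, hL3, smul_zero,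
        smul_zero, sub_zero, ← mul_assoc, ← pow_succ', smul_smul, ← pow_succ]
      rw [show k + l + 1 = k + 1 + l from by omega]
  -- P2a
  have hP2a : ∀ j, Ω ^ j * (Θ * η)
      = (Complex.I) ^ j • (Θ ^ (j + 1) * η)
        + (-(((j : ℕ) : ℂ) / ((m + 2 : ℕ) : ℂ)) * (Complex.I) ^ j) •
            (Θ ^ j * (α * S.d η)) := by
    intro j
    induction j with
    | zero => simp
    | succ k ih =>
      rw [pow_succ' Ω k, mul_assoc, ih, mul_add, mul_smul_comm, mul_smul_comm,
        hΩx (Θ ^ (k + 1) * η), hΩx (Θ ^ k * (α * S.d η)), hL2, hL3, smul_zero,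
        smul_zero, sub_zero, ← mul_assoc Θ (Θ ^ (k + 1)), ← pow_succ',
        ← mul_assoc Θ (Θ ^ k), ← pow_succ']
      push_cast
      match_scalars <;>
      first
        | ring
        | linear_combination
            ((((k:ℂ) + 1) * ((2 + (m:ℂ))⁻¹)) * Complex.I ^ k) * Complex.I_sq
        | linear_combination
            (-((((k:ℂ) + 1) * ((2 + (m:ℂ))⁻¹)) * Complex.I ^ k)) * Complex.I_sq
  -- Assemble LHS
  have hLHS : S.d (Ω ^ (m + 1) * ((Complex.I • α) * η))
      = Complex.I • ((Complex.I) ^ (m + 1) •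
          (Θ ^ (m + 2) * η - Θ ^ (m + 1) * (α * S.d η))) := by
    rw [smul_mul_assoc, mul_smul_comm, hP1 (m + 1), S.d_smul, S.d_smul, hdT]
  rw [hLHS]
  -- T2
  have hT2 : Ω ^ (m + 1) * ((Complex.I • Θ - Complex.I • (α * S.conj α)) * η)
      = Complex.I • (Ω ^ (m + 1) * (Θ * η))
        - Complex.I • ((Complex.I) ^ (m + 1) • (Θ ^ (m + 1) * (α * S.d η))) := by
    rw [sub_mul, smul_mul_assoc, smul_mul_assoc, hKη, mul_sub, mul_smul_comm,
      mul_smul_comm]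
    congr 1
    have h := hP3 (m + 1) 0
    rw [pow_zero, one_mul, add_zero] at h
    rw [h]
  -- T1
  have hY : Ω ^ m * ((Θ * (α * S.conj α)) * η)
      = Complex.I ^ m • (Θ ^ (m + 1) * (α * S.d η)) := by
    rw [mul_assoc Θ, hKη]
    have h := hP3 m 1
    rw [pow_one] at h
    exact h
  have hinner : (1 / ((m + 2 : ℕ) : ℂ)) •
        ((Complex.I • Θ) * (Complex.I • (α * S.conj α)))
      = ((1 / ((m + 2 : ℕ) : ℂ)) * (Complex.I * Complex.I)) •
          (Θ * (α * S.conj α)) := by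
    rw [smul_mul_assoc, mul_smul_comm, smul_smul, smul_smul, mul_assoc]
  have hT1 : Ω ^ m * ((1 / ((m + 2 : ℕ) : ℂ)) •
        ((Complex.I • Θ) * (Complex.I • (α * S.conj α)))) * η
      = ((1 / ((m + 2 : ℕ) : ℂ)) * (Complex.I * Complex.I) * Complex.I ^ m) •
          (Θ ^ (m + 1) * (α * S.d η)) := by
    rw [hinner, mul_smul_comm, smul_mul_assoc, mul_assoc, hY, smul_smul]
  have hQ2 := hP2a (m + 1)
  rw [show m + 1 + 1 = m + 2 from rfl] at hQ2
  rw [hT2, hT1, hQ2]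
  push_cast
  match_scalars <;>
  first
    | ring
    | linear_combination
        ((((m:ℂ) + 1) * ((2 + (m:ℂ))⁻¹)) * Complex.I ^ m) * Complex.I_sq
    | linear_combination
        (-((((m:ℂ) + 1) * ((2 + (m:ℂ))⁻¹)) * Complex.I ^ m)) * Complex.I_sq
end
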